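/- Let S and T be disjoint sets of vertices, and let S' ⊆ S. If f is a maximum flow from S' to T with respect to the capacity function c, and f' is a maximum flow from S ∖ S' to T with respect to the residual capacity r_f, then f + f' is a maximum flow from S to T with respect to c. -/

import Mathlib

open scoped Classical

/-- A pseudoflow with respect to capacity `c`: capacity and antisymmetry constraints. -/
def IsPseudoflow {V : Type*} (c f : V → V → ℝ) : Prop :=
  (∀ u v, f u v ≤ c u v) ∧ (∀ u v, f u v = - f v u)

/-- The flow excess of a vertex `v` under `f`. -/
noncomputable def exc {V : Type*} [Fintype V] (f : V → V → ℝ) (v : V) : ℝ :=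
  ∑ u, f u v

/-- A flow from `S` to `T` with respect to `c`. -/
def IsFlow {V : Type*} [Fintype V] (c : V → V → ℝ) (S T : Set V)
    (f : V → V → ℝ) : Prop :=
  IsPseudoflow c f ∧ ∀ v, v ∉ S ∪ T → exc f v = 0

/-- The value of a flow with sink set `T`. -/
noncomputable def flowValue {V : Type*} [Fintype V] (f : V → V → ℝ) (T : Set V) : ℝ :=
  ∑ t ∈ T.toFinset, exc f t

/-- A maximum flow from `S` to `T` with respect to `c`. -/
def IsMaxFlow {V : Type*} [Fintype V] (c : V → V → ℝ) (S T : Set V)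
    (f : V → V → ℝ) : Prop :=
  IsFlow c S T f ∧ ∀ g, IsFlow c S T g → flowValue g T ≤ flowValue f T

/-- The residualCap capacity with respect to pseudoflow `f` and capacity `c`. -/
def residualCap {V : Type*} (c f : V → V → ℝ) : V → V → ℝ :=
  fun u v => c u v - f u v

/-- A residualCap path (w.r.t. capacity `c` and pseudoflow `f`) from a vertex of `A`
to a vertex of `B`; a single vertex in `A ∩ B` counts as such a path. -/
def ResidualPath {V : Type*} (c f : V → V → ℝ) (A B : Set V) : Prop :=
  ∃ (k : ℕ) (p : Fin (k + 1) → V), p 0 ∈ A ∧ p (Fin.last k) ∈ B ∧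
    ∀ i : Fin k, 0 < residualCap c f (p i.castSucc) (p i.succ)

open Finset

section AuxProof
variable {V : Type*} [Fintype V]

lemma exc_add (g h : V → V → ℝ) (v : V) :
    exc (fun u w => g u w + h u w) v = exc g v + exc h v := by
  simp [exc, Finset.sum_add_distrib]

lemma flowValue_add (g h : V → V → ℝ) (T : Set V) :
    flowValue (fun u w => g u w + h u w) T = flowValue g T + flowValue h T := by
  simp [flowValue, exc_add, Finset.sum_add_distrib]

lemma sum_exc_eq (g : V → V → ℝ) (hg : ∀ u v, g u v = - g v u) (W : Finset V) :
    ∑ w ∈ W, exc g w = ∑ u ∈ Wᶜ, ∑ w ∈ W, g u w := by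
  have h0 : ∑ u ∈ W, ∑ w ∈ W, g u w = 0 := by
    have h1 : ∑ u ∈ W, ∑ w ∈ W, g u w = ∑ u ∈ W, ∑ w ∈ W, g w u := Finset.sum_comm
    have h2 : ∑ u ∈ W, ∑ w ∈ W, g w u = - ∑ u ∈ W, ∑ w ∈ W, g u w := by
      rw [← Finset.sum_neg_distrib]
      exact Finset.sum_congr rfl fun u _ => by
        rw [← Finset.sum_neg_distrib]
        exact Finset.sum_congr rfl fun w _ => by rw [hg w u]
    linarith [h1, h2]
  have : ∑ w ∈ W, exc g w = ∑ u, ∑ w ∈ W, g u w := by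
    rw [Finset.sum_comm]; rfl
  rw [this, ← Finset.sum_add_sum_compl W (fun u => ∑ w ∈ W, g u w), h0, zero_add]

noncomputable def pathFlow {k : ℕ} (p : Fin (k + 1) → V) : V → V → ℝ :=
  fun u v => ∑ i : Fin k, ((if p i.castSucc = u ∧ p i.succ = v then (1:ℝ) else 0)
    - (if p i.castSucc = v ∧ p i.succ = u then (1:ℝ) else 0))

lemma pathFlow_anti {k : ℕ} (p : Fin (k + 1) → V) (u v : V) :
    pathFlow p u v = - pathFlow p v u := by
  have h : pathFlow p u v + pathFlow p v u = 0 := by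
    unfold pathFlow
    rw [← Finset.sum_add_distrib]
    exact Finset.sum_eq_zero fun i _ => by ring
  linarith

lemma pathFlow_le {k : ℕ} (p : Fin (k + 1) → V) (u v : V) :
    pathFlow p u v ≤ k := by
  have : pathFlow p u v ≤ ∑ _i : Fin k, (1:ℝ) := by
    apply Finset.sum_le_sum
    intro i _
    split_ifs <;> norm_num
  simpa using this

lemma pathFlow_pos_mem {k : ℕ} (p : Fin (k + 1) → V) (u v : V)
    (h : 0 < pathFlow p u v) : ∃ i : Fin k, p i.castSucc = u ∧ p i.succ = v := by
  by_contra hc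
  push_neg at hc
  have : pathFlow p u v ≤ 0 := by
    apply Finset.sum_nonpos
    intro i _
    have h1 : (if p i.castSucc = u ∧ p i.succ = v then (1:ℝ) else 0) = 0 := by
      rw [if_neg]; rintro ⟨h1, h2⟩; exact hc i h1 h2
    rw [h1]
    split_ifs <;> norm_num
  linarith

lemma exc_pathFlow {k : ℕ} (p : Fin (k + 1) → V) (v : V) :
    exc (pathFlow p) v =
      (if p (Fin.last k) = v then (1:ℝ) else 0) - (if p 0 = v then (1:ℝ) else 0) := by
  classical
  have step : ∀ i : Fin k,
      (∑ u, ((if p i.castSucc = u ∧ p i.succ = v then (1:ℝ) else 0)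
        - (if p i.castSucc = v ∧ p i.succ = u then (1:ℝ) else 0)))
      = (if p i.succ = v then (1:ℝ) else 0) - (if p i.castSucc = v then (1:ℝ) else 0) := by
    intro i
    rw [Finset.sum_sub_distrib]
    congr 1
    · by_cases h : p i.succ = v
      · simp only [h, and_true]
        rw [Finset.sum_ite_eq]
        simp
      · simp [h]
    · by_cases h : p i.castSucc = v
      · simp only [h, true_and]
        rw [Finset.sum_ite_eq]
        simp
      · simp [h]
  have h1 : exc (pathFlow p) v = ∑ i : Fin k,
      ((if p i.succ = v then (1:ℝ) else 0) - (if p i.castSucc = v then (1:ℝ) else 0)) := by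
    unfold exc pathFlow
    rw [Finset.sum_comm]
    exact Finset.sum_congr rfl fun i _ => step i
  set G : ℕ → ℝ := fun n => if h : n < k + 1 then (if p ⟨n, h⟩ = v then (1:ℝ) else 0) else 0 with hG
  have h2 : ∀ i : Fin k,
      ((if p i.succ = v then (1:ℝ) else 0) - (if p i.castSucc = v then (1:ℝ) else 0))
      = G ((i : ℕ) + 1) - G (i : ℕ) := by
    intro i
    have ha : ((i : ℕ) + 1) < k + 1 := by omega
    have hb : (i : ℕ) < k + 1 := by omega
    have e1 : G ((i : ℕ) + 1) = (if p i.succ = v then (1:ℝ) else 0) := by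
      simp only [hG]; rw [dif_pos ha]
      congr 1
    have e2 : G (i : ℕ) = (if p i.castSucc = v then (1:ℝ) else 0) := by
      simp only [hG]; rw [dif_pos hb]
      congr 1
    rw [e1, e2]
  rw [h1, Finset.sum_congr rfl (fun i _ => h2 i)]
  rw [Fin.sum_univ_eq_sum_range (fun n => G (n + 1) - G n) k, Finset.sum_range_sub]
  have e3 : G k = (if p (Fin.last k) = v then (1:ℝ) else 0) := by
    simp only [hG]; rw [dif_pos (by omega : k < k + 1)]
    rfl
  have e4 : G 0 = (if p 0 = v then (1:ℝ) else 0) := by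
    simp only [hG]; rw [dif_pos (by omega : 0 < k + 1)]
    rfl
  rw [e3, e4]

noncomputable def posMass (h : V → V → ℝ) : ℝ := ∑ u, ∑ v, max (h u v) 0

lemma augment_aux (d h : V → V → ℝ) (hcap : ∀ u v, h u v ≤ d u v)
    (hanti : ∀ u v, h u v = - h v u) (k : ℕ) (hk : 0 < k) (p : Fin (k + 1) → V)
    (hres : ∀ i : Fin k, 0 < d (p i.castSucc) (p i.succ) - h (p i.castSucc) (p i.succ)) :
    ∃ ε > 0, ∃ h2 : V → V → ℝ, (∀ u v, h2 u v ≤ d u v) ∧ (∀ u v, h2 u v = - h2 v u) ∧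
      (∀ v, exc h2 v = exc h v +
        ε * ((if p (Fin.last k) = v then (1:ℝ) else 0) - (if p 0 = v then (1:ℝ) else 0))) := by
  have hne : (univ : Finset (Fin k)).Nonempty := ⟨⟨0, hk⟩, mem_univ _⟩
  set m := univ.inf' hne (fun i : Fin k => d (p i.castSucc) (p i.succ) - h (p i.castSucc) (p i.succ)) with hm
  have hmpos : 0 < m := (Finset.lt_inf'_iff hne).mpr fun i _ => hres i
  have hkpos : (0:ℝ) < (k:ℝ) + 1 := by positivity
  set ε := m / ((k:ℝ) + 1) with hε
  have hεpos : 0 < ε := by positivity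
  refine ⟨ε, hεpos, fun u v => h u v + ε * pathFlow p u v, ?_, ?_, ?_⟩
  · intro u v
    show h u v + ε * pathFlow p u v ≤ d u v
    by_cases hp : 0 < pathFlow p u v
    · obtain ⟨i, hi1, hi2⟩ := pathFlow_pos_mem p u v hp
      have h1 : m ≤ d u v - h u v := by
        have := Finset.inf'_le (b := i)
          (f := fun i : Fin k => d (p i.castSucc) (p i.succ) - h (p i.castSucc) (p i.succ))
          (mem_univ i)
        rwa [hi1, hi2, ← hm] at this
      have h2 : pathFlow p u v ≤ (k:ℝ) := pathFlow_le p u v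
      have h3 : ε * pathFlow p u v ≤ ε * (k:ℝ) := by nlinarith
      have h4 : ε * (k:ℝ) ≤ m := by
        rw [hε, div_mul_eq_mul_div, div_le_iff₀ hkpos]
        nlinarith
      linarith
    · push_neg at hp
      have : ε * pathFlow p u v ≤ 0 := mul_nonpos_of_nonneg_of_nonpos hεpos.le hp
      have := hcap u v
      linarith
  · intro u v
    show h u v + ε * pathFlow p u v = -(h v u + ε * pathFlow p v u)
    rw [hanti u v, pathFlow_anti p u v]
    ring
  · intro v
    have : exc (fun u w => h u w + ε * pathFlow p u w) v = exc h v + ε * exc (pathFlow p) v := by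
      unfold exc
      dsimp only
      rw [Finset.mul_sum, ← Finset.sum_add_distrib]
    rw [this, exc_pathFlow]

lemma cancel_aux (d h : V → V → ℝ) (hd : ∀ u v, 0 ≤ d u v) (hcap : ∀ u v, h u v ≤ d u v)
    (hanti : ∀ u v, h u v = - h v u) (k : ℕ) (hk : 0 < k) (p : Fin (k + 1) → V)
    (hpos : ∀ i : Fin k, 0 < h (p i.castSucc) (p i.succ)) :
    ∃ ε > 0, ∃ h2 : V → V → ℝ, (∀ u v, h2 u v ≤ d u v) ∧ (∀ u v, h2 u v = - h2 v u) ∧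
      (∀ v, exc h2 v = exc h v +
        ε * ((if p 0 = v then (1:ℝ) else 0) - (if p (Fin.last k) = v then (1:ℝ) else 0))) ∧
      posMass h2 < posMass h := by
  have hne : (univ : Finset (Fin k)).Nonempty := ⟨⟨0, hk⟩, mem_univ _⟩
  set m := univ.inf' hne (fun i : Fin k => h (p i.castSucc) (p i.succ)) with hm
  have hmpos : 0 < m := (Finset.lt_inf'_iff hne).mpr fun i _ => hpos i
  have hkpos : (0:ℝ) < (k:ℝ) + 1 := by positivity
  set ε := m / ((k:ℝ) + 1) with hε
  have hεpos : 0 < ε := by positivity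
  have hεk : ε * (k:ℝ) < m := by
    rw [hε, div_mul_eq_mul_div, div_lt_iff₀ hkpos]
    nlinarith
  set h2 : V → V → ℝ := fun u v => h u v - ε * pathFlow p u v with hh2
  -- basic facts for pairs with positive pathFlow
  have hmem : ∀ u v, 0 < pathFlow p u v → m ≤ h u v ∧ 1 ≤ pathFlow p u v := by
    intro u v hp
    obtain ⟨i, hi1, hi2⟩ := pathFlow_pos_mem p u v hp
    constructor
    · have := Finset.inf'_le (b := i)
        (f := fun i : Fin k => h (p i.castSucc) (p i.succ)) (mem_univ i)
      rwa [hi1, hi2, ← hm] at this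
    · -- pathFlow is a sum of terms each equal to indicator diffs; no backward occurrences
      have hnb : ∀ j : Fin k, ¬ (p j.castSucc = v ∧ p j.succ = u) := by
        rintro j ⟨hj1, hj2⟩
        have h1 : 0 < h v u := by
          have := hpos j; rwa [hj1, hj2] at this
        have h2' : 0 < h u v := by
          have := hpos i; rwa [hi1, hi2] at this
        rw [hanti u v] at h2'
        linarith
      have : pathFlow p u v = ∑ j : Fin k,
          (if p j.castSucc = u ∧ p j.succ = v then (1:ℝ) else 0) := by
        unfold pathFlow
        exact Finset.sum_congr rfl fun j _ => by rw [if_neg (hnb j)]; ring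
      rw [this]
      have hle := Finset.single_le_sum (f := fun j : Fin k =>
        (if p j.castSucc = u ∧ p j.succ = v then (1:ℝ) else 0))
        (fun j _ => by split_ifs <;> norm_num) (mem_univ i)
      rw [if_pos ⟨hi1, hi2⟩] at hle
      exact hle
  have key1 : ∀ u v, 0 < pathFlow p u v → 0 < h2 u v ∧ h2 u v < h u v := by
    intro u v hp
    obtain ⟨h1, _⟩ := hmem u v hp
    have h2' : pathFlow p u v ≤ (k:ℝ) := pathFlow_le p u v
    constructor
    · have : ε * pathFlow p u v ≤ ε * (k:ℝ) := by nlinarith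
      simp only [hh2]
      linarith
    · simp only [hh2]
      nlinarith
  have hcap2 : ∀ u v, h2 u v ≤ d u v := by
    intro u v
    rcases lt_trichotomy (pathFlow p u v) 0 with hp | hp | hp
    · -- reverse pair : h2 u v ≤ 0 ≤ d u v
      have hp' : 0 < pathFlow p v u := by rw [pathFlow_anti p v u]; linarith
      have := (key1 v u hp').1
      have hanti2 : h2 u v = - h2 v u := by
        simp only [hh2]; rw [hanti u v, pathFlow_anti p u v]; ring
      rw [hanti2]
      have := hd u v
      linarith
    · simp only [hh2, hp]
      simpa using hcap u v
    · have := (key1 u v hp).2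
      have := hcap u v
      linarith
  refine ⟨ε, hεpos, h2, hcap2, ?_, ?_, ?_⟩
  · intro u v
    simp only [hh2]; rw [hanti u v, pathFlow_anti p u v]; ring
  · intro v
    have : exc h2 v = exc h v - ε * exc (pathFlow p) v := by
      simp only [hh2]
      unfold exc
      dsimp only
      rw [Finset.mul_sum, ← Finset.sum_sub_distrib]
    rw [this, exc_pathFlow]
    ring
  · -- posMass strictly decreases
    have hpair : ∀ u v, max (h2 u v) 0 ≤ max (h u v) 0 := by
      intro u v
      rcases lt_trichotomy (pathFlow p u v) 0 with hp | hp | hp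
      · have hp' : 0 < pathFlow p v u := by rw [pathFlow_anti p v u]; linarith
        have h1 := (key1 v u hp').1
        have hanti2 : h2 u v = - h2 v u := by
          simp only [hh2]; rw [hanti u v, pathFlow_anti p u v]; ring
        have : h2 u v ≤ 0 := by rw [hanti2]; linarith
        have : max (h2 u v) 0 = 0 := max_eq_right this
        rw [this]
        exact le_max_right _ _
      · simp only [hh2, hp]
        simp
      · obtain ⟨h1, h2'⟩ := key1 u v hp
        have : max (h2 u v) 0 = h2 u v := max_eq_left h1.le
        rw [this, max_eq_left]
        · linarith
        · obtain ⟨hm1, _⟩ := hmem u v hp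
          linarith
    -- strictness at the first edge
    set u0 := p (Fin.castSucc ⟨0, hk⟩) with hu0
    set v0 := p (Fin.succ ⟨0, hk⟩) with hv0
    have hp0 : 0 < pathFlow p u0 v0 := by
      have h0 : 0 < h u0 v0 := hpos ⟨0, hk⟩
      -- show pathFlow ≥ 1 directly: sum of nonneg terms with the i=0 term = 1
      have hnb : ∀ j : Fin k, ¬ (p j.castSucc = v0 ∧ p j.succ = u0) := by
        rintro j ⟨hj1, hj2⟩
        have h1 : 0 < h v0 u0 := by have := hpos j; rwa [hj1, hj2] at this
        rw [hanti v0 u0] at h1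
        linarith
      have he : pathFlow p u0 v0 = ∑ j : Fin k,
          (if p j.castSucc = u0 ∧ p j.succ = v0 then (1:ℝ) else 0) := by
        unfold pathFlow
        exact Finset.sum_congr rfl fun j _ => by rw [if_neg (hnb j)]; ring
      rw [he]
      have hone : (if p (Fin.castSucc ⟨0, hk⟩) = u0 ∧ p (Fin.succ ⟨0, hk⟩) = v0 then (1:ℝ) else 0) = 1 := by
        rw [if_pos ⟨rfl, rfl⟩]
      calc (0:ℝ) < 1 := one_pos
        _ = _ := hone.symm
        _ ≤ _ := Finset.single_le_sum (f := fun j : Fin k =>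
            (if p j.castSucc = u0 ∧ p j.succ = v0 then (1:ℝ) else 0))
            (fun j _ => by split_ifs <;> norm_num) (mem_univ _)
    have hstrict : max (h2 u0 v0) 0 < max (h u0 v0) 0 := by
      obtain ⟨h1, h2'⟩ := key1 u0 v0 hp0
      obtain ⟨hm1, _⟩ := hmem u0 v0 hp0
      rw [max_eq_left h1.le, max_eq_left (by linarith : (0:ℝ) ≤ h u0 v0)]
      exact h2'
    unfold posMass
    rw [← Fintype.sum_prod_type' (f := fun u v => max (h2 u v) 0),
        ← Fintype.sum_prod_type' (f := fun u v => max (h u v) 0)]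
    apply Finset.sum_lt_sum
    · intro x _; exact hpair x.1 x.2
    · exact ⟨(u0, v0), mem_univ _, hstrict⟩

lemma residualPath_refl (c f : V → V → ℝ) {A : Set V} {a : V} (ha : a ∈ A) :
    ResidualPath c f A {a} :=
  ⟨0, fun _ => a, ha, rfl, fun i => i.elim0⟩

lemma residualPath_subset {c f : V → V → ℝ} {A A' B B' : Set V}
    (hA : A ⊆ A') (hB : B ⊆ B') (h : ResidualPath c f A B) : ResidualPath c f A' B' := by
  obtain ⟨k, p, h0, hl, he⟩ := h
  exact ⟨k, p, hA h0, hB hl, he⟩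

lemma residualPath_mono {c1 f1 c2 f2 : V → V → ℝ} {A B : Set V}
    (hmono : ∀ u v, 0 < residualCap c1 f1 u v → 0 < residualCap c2 f2 u v)
    (h : ResidualPath c1 f1 A B) : ResidualPath c2 f2 A B := by
  obtain ⟨k, p, h0, hl, he⟩ := h
  exact ⟨k, p, h0, hl, fun i => hmono _ _ (he i)⟩

lemma residualPath_extend {c f : V → V → ℝ} {A : Set V} {u v : V}
    (h : ResidualPath c f A {u}) (huv : 0 < residualCap c f u v) :
    ResidualPath c f A {v} := by
  obtain ⟨k, p, h0, hl, he⟩ := h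
  have hlu : p (Fin.last k) = u := hl
  refine ⟨k + 1, fun j => if hj : (j : ℕ) < k + 1 then p ⟨j, hj⟩ else v, ?_, ?_, ?_⟩
  · dsimp only
    have h0' : ((0 : Fin (k + 2)) : ℕ) < k + 1 := by simp
    rw [dif_pos h0']
    convert h0 using 2 <;> exact Fin.ext (by simp)
  · dsimp only
    have hlast : ¬ ((Fin.last (k + 1) : Fin (k + 2)) : ℕ) < k + 1 := by simp
    rw [dif_neg hlast]
    rfl
  · intro i
    dsimp only
    have hcs : ((i.castSucc : Fin (k + 2)) : ℕ) = (i : ℕ) := rfl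
    have hsc : ((i.succ : Fin (k + 2)) : ℕ) = (i : ℕ) + 1 := rfl
    by_cases hik : (i : ℕ) < k
    · have h1 : ((i.castSucc : Fin (k + 2)) : ℕ) < k + 1 := by omega
      have h2 : ((i.succ : Fin (k + 2)) : ℕ) < k + 1 := by omega
      rw [dif_pos h1, dif_pos h2]
      have := he ⟨(i : ℕ), hik⟩
      convert this using 3 <;> exact Fin.ext (by simp [hcs, hsc])
    · have hik' : (i : ℕ) = k := by omega
      have h1 : ((i.castSucc : Fin (k + 2)) : ℕ) < k + 1 := by omega
      have h2 : ¬ ((i.succ : Fin (k + 2)) : ℕ) < k + 1 := by omega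
      rw [dif_pos h1, dif_neg h2]
      have : p ⟨((i.castSucc : Fin (k + 2)) : ℕ), h1⟩ = u := by
        rw [← hlu]
        congr 1
        exact Fin.ext (by simp [hcs, hik'])
      rw [this]
      exact huv

lemma residualPath_prepend {c f : V → V → ℝ} {B : Set V} {u v : V}
    (huv : 0 < residualCap c f u v) (h : ResidualPath c f {v} B) :
    ResidualPath c f {u} B := by
  obtain ⟨k, p, h0, hl, he⟩ := h
  have h0v : p 0 = v := h0
  refine ⟨k + 1, fun j => if hj : (j : ℕ) = 0 then u else p ⟨(j : ℕ) - 1, by omega⟩, ?_, ?_, ?_⟩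
  · dsimp only
    rw [dif_pos (by simp : ((0 : Fin (k + 2)) : ℕ) = 0)]
    rfl
  · dsimp only
    have hlast : ¬ ((Fin.last (k + 1) : Fin (k + 2)) : ℕ) = 0 := by simp
    rw [dif_neg hlast]
    convert hl using 2 <;> exact Fin.ext (by simp)
  · intro i
    dsimp only
    have hcs : ((i.castSucc : Fin (k + 2)) : ℕ) = (i : ℕ) := rfl
    have hsc : ((i.succ : Fin (k + 2)) : ℕ) = (i : ℕ) + 1 := rfl
    have hsc0 : ¬ ((i.succ : Fin (k + 2)) : ℕ) = 0 := by omega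
    by_cases hi0 : (i : ℕ) = 0
    · have h1 : ((i.castSucc : Fin (k + 2)) : ℕ) = 0 := by omega
      rw [dif_pos h1, dif_neg hsc0]
      have : p ⟨((i.succ : Fin (k + 2)) : ℕ) - 1, by omega⟩ = v := by
        rw [← h0v]
        congr 1
        exact Fin.ext (by simp [hsc, hi0])
      rw [this]
      exact huv
    · have h1 : ¬ ((i.castSucc : Fin (k + 2)) : ℕ) = 0 := by omega
      rw [dif_neg h1, dif_neg hsc0]
      have hj : (i : ℕ) - 1 < k := by omega
      have := he ⟨(i : ℕ) - 1, hj⟩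
      convert this using 3 <;> exact Fin.ext (by simp [hcs, hsc] <;> omega)

lemma exists_flow_gt (d : V → V → ℝ) (X Y : Set V) (hXY : Disjoint X Y)
    (h : V → V → ℝ) (hh : IsFlow d X Y h) (hp : ResidualPath d h X Y) :
    ∃ g, IsFlow d X Y g ∧ flowValue h Y < flowValue g Y := by
  obtain ⟨k, p, h0, hl, he⟩ := hp
  have hk : 0 < k := by
    rcases Nat.eq_zero_or_pos k with h' | h'
    · exfalso
      subst h'
      have hY : p 0 ∈ Y := hl
      exact Set.disjoint_left.mp hXY h0 hY
    · exact h'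
  have hres : ∀ i : Fin k, 0 < d (p i.castSucc) (p i.succ) - h (p i.castSucc) (p i.succ) := by
    intro i
    simpa [residualCap] using he i
  obtain ⟨ε, hεpos, h2, hcap2, hanti2, hexc2⟩ :=
    augment_aux d h hh.1.1 hh.1.2 k hk p hres
  refine ⟨h2, ⟨⟨hcap2, hanti2⟩, ?_⟩, ?_⟩
  · intro v hv
    rw [hexc2 v, hh.2 v hv]
    have h1 : p (Fin.last k) ≠ v := by
      intro hh'
      exact hv (Set.mem_union_right _ (hh' ▸ hl))
    have h2' : p 0 ≠ v := by
      intro hh'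
      exact hv (Set.mem_union_left _ (hh' ▸ h0))
    rw [if_neg h1, if_neg h2']
    ring
  · unfold flowValue
    have : ∀ t ∈ Y.toFinset, exc h2 t = exc h t +
        ε * ((if p (Fin.last k) = t then (1:ℝ) else 0) - (if p 0 = t then (1:ℝ) else 0)) :=
      fun t _ => hexc2 t
    rw [Finset.sum_congr rfl this, Finset.sum_add_distrib, ← Finset.mul_sum,
      Finset.sum_sub_distrib, Finset.sum_ite_eq, Finset.sum_ite_eq]
    rw [if_pos (Set.mem_toFinset.mpr hl), if_neg (fun hc => Set.disjoint_left.mp hXY h0 (Set.mem_toFinset.mp hc))]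
    simp [hεpos]

lemma exists_maxflow_nice (d : V → V → ℝ) (hd : ∀ u v, 0 ≤ d u v) (X Y : Set V) :
    ∃ g, IsFlow d X Y g ∧ (∀ g', IsFlow d X Y g' → flowValue g' Y ≤ flowValue g Y) ∧
      (∀ g', IsFlow d X Y g' → flowValue g' Y = flowValue g Y → posMass g ≤ posMass g') := by
  have hev : ∀ u v : V, Continuous fun g : V → V → ℝ => g u v :=
    fun u v => (continuous_apply v).comp (continuous_apply u)
  have hexc : ∀ v : V, Continuous fun g : V → V → ℝ => exc g v := by
    intro v
    unfold exc
    exact continuous_finset_sum _ fun u _ => hev u v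
  have hval : Continuous fun g : V → V → ℝ => flowValue g Y := by
    unfold flowValue
    exact continuous_finset_sum _ fun t _ => hexc t
  have hΦ : Continuous fun g : V → V → ℝ => posMass g := by
    unfold posMass
    exact continuous_finset_sum _ fun u _ =>
      continuous_finset_sum _ fun v _ => (hev u v).max continuous_const
  set K : Set (V → V → ℝ) := {g | IsFlow d X Y g} with hK
  have hKclosed : IsClosed K := by
    have e : K = (⋂ u, ⋂ v, {g : V → V → ℝ | g u v ≤ d u v}) ∩
        ((⋂ u, ⋂ v, {g : V → V → ℝ | g u v = - g v u}) ∩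
         (⋂ v, ⋂ (_ : v ∉ X ∪ Y), {g : V → V → ℝ | exc g v = 0})) := by
      ext g
      simp only [hK, Set.mem_setOf_eq, Set.mem_inter_iff, Set.mem_iInter, IsFlow, IsPseudoflow]
      tauto
    rw [e]
    refine IsClosed.inter ?_ (IsClosed.inter ?_ ?_)
    · exact isClosed_iInter fun u => isClosed_iInter fun v =>
        isClosed_le (hev u v) continuous_const
    · exact isClosed_iInter fun u => isClosed_iInter fun v =>
        isClosed_eq (hev u v) (hev v u).neg
    · exact isClosed_iInter fun v => isClosed_iInter fun _ =>
        isClosed_eq (hexc v) continuous_const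
  have hKcompact : IsCompact K := by
    have hC : IsCompact (Set.pi Set.univ fun u : V =>
        Set.pi Set.univ fun v : V => Set.Icc (- d v u) (d u v)) :=
      isCompact_univ_pi fun u => isCompact_univ_pi fun v => isCompact_Icc
    apply IsCompact.of_isClosed_subset hC hKclosed
    intro g hg
    rw [Set.mem_univ_pi]
    intro u
    rw [Set.mem_univ_pi]
    intro v
    constructor
    · have h1 := hg.1.1 v u
      have h2 := hg.1.2 u v
      rw [h2]
      linarith
    · exact hg.1.1 u v
  have hKne : K.Nonempty := by
    refine ⟨fun _ _ => 0, ⟨⟨fun u v => hd u v, fun u v => by norm_num⟩, fun v _ => ?_⟩⟩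
    simp [exc]
  obtain ⟨g0, hg0K, hg0max'⟩ := hKcompact.exists_isMaxOn hKne hval.continuousOn
  have hg0max : ∀ g' ∈ K, flowValue g' Y ≤ flowValue g0 Y := fun g' hg' => hg0max' hg'
  set K2 : Set (V → V → ℝ) := K ∩ {g | flowValue g Y = flowValue g0 Y} with hK2
  have hK2compact : IsCompact K2 :=
    hKcompact.inter_right (isClosed_eq hval continuous_const)
  have hK2ne : K2.Nonempty := ⟨g0, hg0K, rfl⟩
  obtain ⟨gs, hgsK2, hgsmin'⟩ := hK2compact.exists_isMinOn hK2ne hΦ.continuousOn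
  have hgsmin : ∀ g' ∈ K2, posMass gs ≤ posMass g' := fun g' hg' => hgsmin' hg'
  refine ⟨gs, hgsK2.1, ?_, ?_⟩
  · intro g' hg'
    calc flowValue g' Y ≤ flowValue g0 Y := hg0max g' hg'
      _ = flowValue gs Y := hgsK2.2.symm
  · intro g' hg' hval'
    exact hgsmin g' ⟨hg', show flowValue g' Y = flowValue g0 Y by rw [hval']; exact hgsK2.2⟩

lemma key_lemma (d : V → V → ℝ) (hd : ∀ u v, 0 ≤ d u v) (X1 X2 Y : Set V)
    (hX1Y : Disjoint X1 Y)
    (hnp : ¬ ResidualPath d 0 X1 Y)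
    (f' : V → V → ℝ) (hf' : IsMaxFlow d X2 Y f')
    (g : V → V → ℝ) (hg : IsFlow d (X1 ∪ X2) Y g) :
    flowValue g Y ≤ flowValue f' Y := by
  obtain ⟨gs, hgsF, hgsmax, hgsmin⟩ := exists_maxflow_nice d hd (X1 ∪ X2) Y
  have cap := hgsF.1.1
  have anti := hgsF.1.2
  have excflow := hgsF.2
  have hrc : ∀ u w : V, residualCap gs 0 u w = gs u w := by
    intro u w; simp [residualCap]
  have hrcd : ∀ u w : V, residualCap d 0 u w = d u w := by
    intro u w; simp [residualCap]
  suffices hgs2 : IsFlow d X2 Y gs by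
    exact le_trans (hgsmax g hg) (hf'.2 gs hgs2)
  refine ⟨hgsF.1, ?_⟩
  intro v hv
  by_cases hvX1 : v ∈ X1
  swap
  · exact excflow v (by
      intro hmem
      rcases hmem with hmem | hmem
      · rcases hmem with hmem | hmem
        · exact hvX1 hmem
        · exact hv (Set.mem_union_left _ hmem)
      · exact hv (Set.mem_union_right _ hmem))
  · -- v ∈ X1, v ∉ X2 ∪ Y
    have hvY : v ∉ Y := fun hc => Set.disjoint_left.mp hX1Y hvX1 hc
    by_contra hne
    rcases lt_trichotomy (exc gs v) 0 with hneg | h0 | hpos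
    · -- forward closure from v
      set UF : Finset V := univ.filter (fun w => ResidualPath gs 0 {v} {w}) with hUF
      have hvU : v ∈ UF := mem_filter.mpr ⟨mem_univ _, residualPath_refl _ _ rfl⟩
      have hclosed : ∀ w ∈ UF, ∀ z, 0 < gs w z → z ∈ UF := by
        intro w hw z hz
        refine mem_filter.mpr ⟨mem_univ _, residualPath_extend (mem_filter.mp hw).2 ?_⟩
        rw [hrc]; exact hz
      have hYU : ∀ w ∈ UF, w ∉ Y := by
        intro w hw hwY
        apply hnp
        refine residualPath_subset (Set.singleton_subset_iff.mpr hvX1)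
          (Set.singleton_subset_iff.mpr hwY) ?_
        refine residualPath_mono ?_ (mem_filter.mp hw).2
        intro a b hab
        rw [hrc] at hab
        rw [hrcd]
        exact lt_of_lt_of_le hab (cap a b)
      have hsumnn : 0 ≤ ∑ w ∈ UF, exc gs w := by
        rw [sum_exc_eq gs anti UF]
        apply Finset.sum_nonneg
        intro u hu
        apply Finset.sum_nonneg
        intro w hw
        by_contra h'
        push_neg at h'
        have h'' : 0 < gs w u := by rw [anti w u]; linarith
        exact (Finset.mem_compl.mp hu) (hclosed w hw u h'')
      have hx3 : ∃ x3 ∈ UF, 0 < exc gs x3 := by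
        by_contra hc
        push_neg at hc
        have h1 : ∑ w ∈ UF.erase v, exc gs w ≤ 0 :=
          Finset.sum_nonpos fun w hw => hc w (Finset.mem_of_mem_erase hw)
        have h2 := Finset.add_sum_erase UF (exc gs) hvU
        linarith
      obtain ⟨x3, hx3U, hx3pos⟩ := hx3
      have hx3Y : x3 ∉ Y := hYU x3 hx3U
      have hx3S : x3 ∈ X1 ∪ X2 := by
        by_contra hc
        have : x3 ∉ (X1 ∪ X2) ∪ Y := by
          intro hmem
          rcases hmem with hmem | hmem
          · exact hc hmem
          · exact hx3Y hmem
        rw [excflow x3 this] at hx3pos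
        exact lt_irrefl 0 hx3pos
      have hx3v : x3 ≠ v := by
        intro h
        rw [h] at hx3pos
        linarith
      obtain ⟨k, p, hp0, hpl, hpe⟩ := (mem_filter.mp hx3U).2
      have hp0v : p 0 = v := hp0
      have hplx : p (Fin.last k) = x3 := hpl
      have hk : 0 < k := by
        rcases Nat.eq_zero_or_pos k with h' | h'
        · exfalso
          subst h'
          apply hx3v
          rw [← hplx, ← hp0v]
          exact congrArg p (by decide)
        · exact h'
      have hpose : ∀ i : Fin k, 0 < gs (p i.castSucc) (p i.succ) := by
        intro i
        have := hpe i
        rwa [hrc] at this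
      obtain ⟨ε, hε, g2, hc2, ha2, he2, hΦ2⟩ := cancel_aux d gs hd cap anti k hk p hpose
      have hflow2 : IsFlow d (X1 ∪ X2) Y g2 := by
        refine ⟨⟨hc2, ha2⟩, ?_⟩
        intro w hw
        rw [he2 w, excflow w hw, hp0v, hplx]
        have h1 : v ≠ w := by
          intro h; rw [h] at hvX1
          exact hw (Set.mem_union_left _ (Set.mem_union_left _ hvX1))
        have h2 : x3 ≠ w := by
          intro h; rw [h] at hx3S
          exact hw (Set.mem_union_left _ hx3S)
        rw [if_neg h1, if_neg h2]
        ring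
      have hval2 : flowValue g2 Y = flowValue gs Y := by
        unfold flowValue
        rw [Finset.sum_congr rfl (fun t _ => he2 t), Finset.sum_add_distrib, ← Finset.mul_sum,
          Finset.sum_sub_distrib, hp0v, hplx, Finset.sum_ite_eq, Finset.sum_ite_eq]
        rw [if_neg (fun hc => hvY (Set.mem_toFinset.mp hc)),
          if_neg (fun hc => hx3Y (Set.mem_toFinset.mp hc))]
        ring
      have := hgsmin g2 hflow2 hval2
      linarith
    · exact hne h0
    · -- backward closure to v
      set WF : Finset V := univ.filter (fun w => ResidualPath gs 0 {w} {v}) with hWF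
      have hvW : v ∈ WF := mem_filter.mpr ⟨mem_univ _, residualPath_refl _ _ rfl⟩
      have hclosed : ∀ w ∈ WF, ∀ u, 0 < gs u w → u ∈ WF := by
        intro w hw u hu
        refine mem_filter.mpr ⟨mem_univ _, residualPath_prepend ?_ (mem_filter.mp hw).2⟩
        rw [hrc]; exact hu
      have hsumnp : ∑ w ∈ WF, exc gs w ≤ 0 := by
        rw [sum_exc_eq gs anti WF]
        apply Finset.sum_nonpos
        intro u hu
        apply Finset.sum_nonpos
        intro w hw
        by_contra h'
        push_neg at h'
        exact (Finset.mem_compl.mp hu) (hclosed w hw u h')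
      have hw1 : ∃ w1 ∈ WF, exc gs w1 < 0 := by
        by_contra hc
        push_neg at hc
        have h1 : 0 ≤ ∑ w ∈ WF.erase v, exc gs w :=
          Finset.sum_nonneg fun w hw => hc w (Finset.mem_of_mem_erase hw)
        have h2 := Finset.add_sum_erase WF (exc gs) hvW
        linarith
      obtain ⟨w1, hw1W, hw1neg⟩ := hw1
      have hw1S : w1 ∈ (X1 ∪ X2) ∪ Y := by
        by_contra hc
        rw [excflow w1 hc] at hw1neg
        exact lt_irrefl 0 hw1neg
      have hw1v : w1 ≠ v := by
        intro h
        rw [h] at hw1neg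
        linarith
      obtain ⟨k, p, hp0, hpl, hpe⟩ := (mem_filter.mp hw1W).2
      have hp0w : p 0 = w1 := hp0
      have hplv : p (Fin.last k) = v := hpl
      have hk : 0 < k := by
        rcases Nat.eq_zero_or_pos k with h' | h'
        · exfalso
          subst h'
          apply hw1v
          rw [← hp0w, ← hplv]
          exact congrArg p (by decide)
        · exact h'
      have hpose : ∀ i : Fin k, 0 < gs (p i.castSucc) (p i.succ) := by
        intro i
        have := hpe i
        rwa [hrc] at this
      obtain ⟨ε, hε, g2, hc2, ha2, he2, hΦ2⟩ := cancel_aux d gs hd cap anti k hk p hpose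
      have hflow2 : IsFlow d (X1 ∪ X2) Y g2 := by
        refine ⟨⟨hc2, ha2⟩, ?_⟩
        intro w hw
        rw [he2 w, excflow w hw, hp0w, hplv]
        have h1 : w1 ≠ w := by
          intro h; rw [h] at hw1S
          exact hw hw1S
        have h2 : v ≠ w := by
          intro h; rw [h] at hvX1
          exact hw (Set.mem_union_left _ (Set.mem_union_left _ hvX1))
        rw [if_neg h1, if_neg h2]
        ring
      have hval2 : flowValue g2 Y = flowValue gs Y +
          ε * ((if w1 ∈ Y.toFinset then (1:ℝ) else 0) - 0) := by
        unfold flowValue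
        rw [Finset.sum_congr rfl (fun t _ => he2 t), Finset.sum_add_distrib, ← Finset.mul_sum,
          Finset.sum_sub_distrib, hp0w, hplv, Finset.sum_ite_eq, Finset.sum_ite_eq]
        rw [if_neg (fun hc => hvY (Set.mem_toFinset.mp hc))]
      by_cases hw1Y : w1 ∈ Y
      · have : flowValue g2 Y = flowValue gs Y + ε := by
          rw [hval2, if_pos (Set.mem_toFinset.mpr hw1Y)]
          ring
        have hle := hgsmax g2 hflow2
        linarith
      · have hval2' : flowValue g2 Y = flowValue gs Y := by
          rw [hval2, if_neg (fun hc => hw1Y (Set.mem_toFinset.mp hc))]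
          ring
        have := hgsmin g2 hflow2 hval2'
        linarith

end AuxProof

theorem maxFlow_add_sources {V : Type*} [Fintype V] (c f f' : V → V → ℝ)
    (S T S' : Set V)
    (hc : ∀ u v, 0 ≤ c u v)
    (hST : Disjoint S T)
    (hS' : S' ⊆ S)
    (hf : IsMaxFlow c S' T f)
    (hf' : IsMaxFlow (residualCap c f) (S \ S') T f') :
    IsMaxFlow c S T (fun u v => f u v + f' u v) := by
  have hfp := hf.1.1
  have hfp' := hf'.1.1
  have hd : ∀ u v, 0 ≤ residualCap c f u v := by
    intro u v
    have := hfp.1 u v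
    simp only [residualCap]
    linarith
  have hS'T : Disjoint S' T := hST.mono_left hS'
  have hflow : IsFlow c S T (fun u v => f u v + f' u v) := by
    refine ⟨⟨?_, ?_⟩, ?_⟩
    · intro u v
      show f u v + f' u v ≤ c u v
      have h1 := hfp'.1 u v
      simp only [residualCap] at h1
      have h2 := hfp.1 u v
      linarith
    · intro u v
      show f u v + f' u v = -(f v u + f' v u)
      rw [hfp.2 u v, hfp'.2 u v]
      ring
    · intro v hvST
      have h1 : v ∉ S' ∪ T := by
        intro hc'
        rcases hc' with hc' | hc'
        · exact hvST (Set.mem_union_left _ (hS' hc'))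
        · exact hvST (Set.mem_union_right _ hc')
      have h2 : v ∉ (S \ S') ∪ T := by
        intro hc'
        rcases hc' with hc' | hc'
        · exact hvST (Set.mem_union_left _ hc'.1)
        · exact hvST (Set.mem_union_right _ hc')
      rw [exc_add, hf.1.2 v h1, hf'.1.2 v h2]
      ring
  refine ⟨hflow, ?_⟩
  intro g hg
  have hnp : ¬ ResidualPath (residualCap c f) 0 S' T := by
    intro hp
    have hp' : ResidualPath c f S' T := by
      refine residualPath_mono ?_ hp
      intro a b hab
      simp only [residualCap, Pi.zero_apply, sub_zero] at hab ⊢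
      linarith
    obtain ⟨g', hg', hlt⟩ := exists_flow_gt c S' T hS'T f hf.1 hp'
    have := hf.2 g' hg'
    linarith
  have hgf : IsFlow (residualCap c f) S T (fun u v => g u v - f u v) := by
    refine ⟨⟨?_, ?_⟩, ?_⟩
    · intro u v
      show g u v - f u v ≤ residualCap c f u v
      have h1 := hg.1.1 u v
      simp only [residualCap]
      linarith
    · intro u v
      show g u v - f u v = -(g v u - f v u)
      rw [hg.1.2 u v, hfp.2 u v]
      ring
    · intro v hv
      have h1 : v ∉ S' ∪ T := by
        intro hc'
        rcases hc' with hc' | hc'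
        · exact hv (Set.mem_union_left _ (hS' hc'))
        · exact hv (Set.mem_union_right _ hc')
      have : exc (fun u w => g u w - f u w) v = exc g v - exc f v := by
        unfold exc
        dsimp only
        rw [Finset.sum_sub_distrib]
      rw [this, hg.2 v hv, hf.1.2 v h1]
      ring
  have hgf' : IsFlow (residualCap c f) (S' ∪ (S \ S')) T (fun u v => g u v - f u v) := by
    rwa [Set.union_diff_cancel hS']
  have hkey := key_lemma (residualCap c f) hd S' (S \ S') T hS'T hnp f' hf' _ hgf'
  have hval1 : flowValue g T = flowValue f T + flowValue (fun u v => g u v - f u v) T := by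
    have he : g = fun u v => f u v + (g u v - f u v) := by
      funext u v
      ring
    conv_lhs => rw [he]
    rw [flowValue_add]
  have hval2 : flowValue (fun u v => f u v + f' u v) T = flowValue f T + flowValue f' T :=
    flowValue_add f f' T
  rw [hval2, hval1]
  linarith
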